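/- Let A and B be independent random variables taking values in {0,1}^n, and fix i ∈ [n]. Then the conditional Shannon entropy of the i-th coordinate of the coordinatewise union satisfies H((A ∪ B)_i | A_{<i}, B_{<i}) ≥ (1/(2φ))·( Pr[A_i = 0]·H(B_i | B_{<i}) + Pr[B_i = 0]·H(A_i | A_{<i}) ), where X_{<i} denotes the tuple of coordinates (X_1, …, X_{i−1}). -/

import Mathlib

open scoped Classical in
/-- Probability of an event `E` under the probability mass function `μ`
on a finite sample space. -/
noncomputable def probOf {Ω : Type*} [Fintype Ω] (μ : Ω → ℝ) (E : Ω → Prop) : ℝ :=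
  ∑ ω, if E ω then μ ω else 0

/-- Shannon entropy (base 2) of a random variable `X` with values in a finite type,
under the probability mass function `μ` (note `Real.logb 2 0 = 0` by convention). -/
noncomputable def entropy {Ω V : Type*} [Fintype Ω] [Fintype V] (μ : Ω → ℝ) (X : Ω → V) : ℝ :=
  ∑ v : V, -(probOf μ (fun ω => X ω = v) * Real.logb 2 (probOf μ (fun ω => X ω = v)))

/-- Conditional Shannon entropy `H(X | Y) = H(X, Y) - H(Y)`. -/
noncomputable def condEntropy {Ω V W : Type*} [Fintype Ω] [Fintype V] [Fintype W]
    (μ : Ω → ℝ) (X : Ω → V) (Y : Ω → W) : ℝ :=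
  entropy μ (fun ω => (X ω, Y ω)) - entropy μ Y

/-- The tuple of coordinates `(X_1, …, X_{i-1})` of `X : {0,1}^n`. -/
def below {n : ℕ} (X : Fin n → Bool) (i : Fin n) : Fin i → Bool :=
  fun j => X ⟨j.1, j.2.trans i.2⟩


open Real Set

/-- Generic: nonneg on `Ici 0` from derivative. -/
lemma nonneg_of_hasDerivAt_Ici {f f' : ℝ → ℝ} (h0 : f 0 = 0)
    (hd : ∀ t ∈ Set.Ici (0:ℝ), HasDerivAt f (f' t) t)
    (h' : ∀ t ∈ Set.Ioi (0:ℝ), 0 ≤ f' t) {t : ℝ} (ht : 0 ≤ t) : 0 ≤ f t := by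
  have hm : MonotoneOn f (Set.Ici (0:ℝ)) := by
    apply monotoneOn_of_deriv_nonneg (convex_Ici 0)
      (fun x hx => (hd x hx).continuousAt.continuousWithinAt)
    · intro x hx
      rw [interior_Ici] at hx
      exact (hd x (mem_Ici.2 (le_of_lt hx))).differentiableAt.differentiableWithinAt
    · intro x hx
      rw [interior_Ici] at hx
      rw [(hd x (mem_Ici.2 (le_of_lt hx))).deriv]
      exact h' x hx
  have := hm (self_mem_Ici) (mem_Ici.2 ht) ht
  linarith [this]

/-- Midpoint (Padé) lower bound for log. -/
lemma pade_le_log {t : ℝ} (ht : 0 ≤ t) : 2*t/(2+t) ≤ Real.log (1+t) := by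
  have key : 0 ≤ Real.log (1+t) - 2*t/(2+t) := by
    apply nonneg_of_hasDerivAt_Ici (f := fun t => Real.log (1+t) - 2*t/(2+t))
      (f' := fun t => 1/(1+t) - 4/(2+t)^2) (by norm_num) _ _ ht
    · intro x hx
      simp only [mem_Ici] at hx
      have h1 : (1:ℝ) + x ≠ 0 := by linarith
      have h2 : (2:ℝ) + x ≠ 0 := by linarith
      have hlog : HasDerivAt (fun t : ℝ => Real.log (1+t)) (1/(1+x)) x := by
        have := ((hasDerivAt_id x).const_add 1).log h1
        simpa using this
      have hrat : HasDerivAt (fun t : ℝ => 2*t/(2+t)) (4/(2+x)^2) x := by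
        have := ((hasDerivAt_id x).const_mul 2).div ((hasDerivAt_id x).const_add 2) h2
        refine this.congr_deriv ?_
        simp only [id]
        field_simp
        ring
      exact hlog.sub hrat
    · intro x hx
      simp only [mem_Ioi] at hx
      have h1 : (0:ℝ) < 1 + x := by linarith
      have h2 : (0:ℝ) < 2 + x := by linarith
      rw [sub_nonneg, div_le_div_iff₀ (by positivity) h1]
      nlinarith [sq_nonneg x]
  linarith

/-- Trapezoid (Padé) upper bound for log. -/
lemma log_le_pade {t : ℝ} (ht : 0 ≤ t) : Real.log (1+t) ≤ t*(2+t)/(2+2*t) := by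
  have key : 0 ≤ t*(2+t)/(2+2*t) - Real.log (1+t) := by
    apply nonneg_of_hasDerivAt_Ici (f := fun t => t*(2+t)/(2+2*t) - Real.log (1+t))
      (f' := fun t => (t^2+2*t+2)/(2*(1+t)^2) - 1/(1+t)) (by norm_num) _ _ ht
    · intro x hx
      simp only [mem_Ici] at hx
      have h1 : (1:ℝ) + x ≠ 0 := by linarith
      have h2 : (2:ℝ) + 2*x ≠ 0 := by linarith
      have hlog : HasDerivAt (fun t : ℝ => Real.log (1+t)) (1/(1+x)) x := by
        have := ((hasDerivAt_id x).const_add 1).log h1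
        simpa using this
      have hrat : HasDerivAt (fun t : ℝ => t*(2+t)/(2+2*t)) ((x^2+2*x+2)/(2*(1+x)^2)) x := by
        have hn : HasDerivAt (fun t : ℝ => t*(2+t)) (1*(2+x) + x*1) x :=
          (hasDerivAt_id x).mul ((hasDerivAt_id x).const_add 2)
        have := hn.div (((hasDerivAt_id x).const_mul 2).const_add 2) h2
        refine this.congr_deriv ?_
        simp only [id]
        field_simp
        ring
      exact hrat.sub hlog
    · intro x hx
      simp only [mem_Ioi] at hx
      have h1 : (0:ℝ) < 1 + x := by linarith
      rw [sub_nonneg, div_le_div_iff₀ h1 (by positivity)]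
      nlinarith [sq_nonneg x]
  linarith

/-- `log x ≥ 1 - 1/x` for `x > 0`. -/
lemma one_sub_inv_le_log {x : ℝ} (hx : 0 < x) : 1 - 1/x ≤ Real.log x := by
  have := Real.log_le_sub_one_of_pos (show (0:ℝ) < 1/x by positivity)
  rw [Real.log_div one_ne_zero (ne_of_gt hx)] at this
  simp at this
  rw [one_div]
  linarith


open Real Set

noncomputable def Φr : ℝ := (1 + Real.sqrt 5) / 2

lemma s5_sq : Real.sqrt 5 ^ 2 = 5 := Real.sq_sqrt (by norm_num)
lemma s5_pos : (0:ℝ) < Real.sqrt 5 := Real.sqrt_pos.2 (by norm_num)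
lemma s5_lb : (2.2360679:ℝ) < Real.sqrt 5 := by nlinarith [s5_sq, s5_pos]
lemma s5_ub : Real.sqrt 5 < 2.2360680 := by nlinarith [s5_sq, s5_pos]

lemma Phi_sq : Φr^2 = Φr + 1 := by unfold Φr; nlinarith [s5_sq]
lemma Phi_lb : (1.6180339:ℝ) < Φr := by unfold Φr; nlinarith [s5_lb]
lemma Phi_ub : Φr < 1.6180340 := by unfold Φr; nlinarith [s5_ub]
lemma Phi_pos : (0:ℝ) < Φr := by nlinarith [Phi_lb]
lemma one_lt_Phi : (1:ℝ) < Φr := by nlinarith [Phi_lb]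

noncomputable def phif (u : ℝ) : ℝ := u * Real.log u - (u-1) * Real.log (u-1)

noncomputable def Pf (u : ℝ) : ℝ :=
  (2*u^2 - Φr*u) * Real.log u + (Φr - u - 1) * ((u-1) * Real.log (u-1))
    - (u^2-1) * Real.log (u+1)

noncomputable def P1 (u : ℝ) : ℝ :=
  (4*u - Φr) * Real.log u + (Φr - 2*u) * Real.log (u-1) - 2*u * Real.log (u+1)

noncomputable def P2 (u : ℝ) : ℝ :=
  4*Real.log u - 2*Real.log (u-1) - 2*Real.log (u+1)
    + (2*u^2-4*u+Φr)/(u^2-u) - 2*u/(u+1)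

noncomputable def P3 (u : ℝ) : ℝ :=
  4/u - 4*u/(u^2-1) + (2*u^2-2*Φr*u+Φr)/(u^2-u)^2 - 2/(u+1)^2

lemma Pf_eq {u : ℝ} (hu : 1 < u) : Pf u = phif (u^2) - Φr * phif u := by
  have h1 : (0:ℝ) < u - 1 := by linarith
  have h2 : (0:ℝ) < u + 1 := by linarith
  have hsq : u^2 - 1 = (u-1)*(u+1) := by ring
  have hlsq : Real.log (u^2) = 2 * Real.log u := by
    rw [sq, Real.log_mul (by linarith) (by linarith)]; ring
  have hlm : Real.log (u^2-1) = Real.log (u-1) + Real.log (u+1) := by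
    rw [hsq, Real.log_mul (ne_of_gt h1) (ne_of_gt h2)]
  unfold Pf phif
  rw [hlm, hlsq]
  ring

lemma hasDerivAt_Pf {u : ℝ} (hu : 1 < u) : HasDerivAt Pf (P1 u) u := by
  have hu0 : u ≠ 0 := by linarith
  have hum : u - 1 ≠ 0 := by intro h; nlinarith [h]
  have hum' : (0:ℝ) < u - 1 := by linarith
  have hup : u + 1 ≠ 0 := by linarith
  have d1 : HasDerivAt (fun u : ℝ => (2*u^2 - Φr*u) * Real.log u)
      ((2*(2*u) - Φr*1) * Real.log u + (2*u^2 - Φr*u) * (1/u)) u := by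
    have ha : HasDerivAt (fun u : ℝ => 2*u^2 - Φr*u) (2*(2*u) - Φr*1) u := by
      have := ((hasDerivAt_pow 2 u).const_mul 2).sub ((hasDerivAt_id u).const_mul Φr)
      exact this.congr_deriv (by simp)
    have hb : HasDerivAt Real.log (1/u) u := by
      simpa [one_div] using Real.hasDerivAt_log hu0
    exact ha.mul hb
  have d2 : HasDerivAt (fun u : ℝ => (Φr - u - 1) * ((u-1) * Real.log (u-1)))
      ((-1) * ((u-1) * Real.log (u-1)) + (Φr - u - 1) * (Real.log (u-1) + 1)) u := by
    have ha : HasDerivAt (fun u : ℝ => Φr - u - 1) (-1 : ℝ) u := by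
      have := (((hasDerivAt_id u).const_sub Φr).sub_const 1)
      simpa using this
    have hb : HasDerivAt (fun u : ℝ => (u-1) * Real.log (u-1)) (Real.log (u-1) + 1) u := by
      have hc : HasDerivAt (fun x : ℝ => x * Real.log x) (Real.log (u-1) + 1) (u-1) :=
        Real.hasDerivAt_mul_log hum
      have := hc.comp u ((hasDerivAt_id u).sub_const 1)
      exact this.congr_deriv (by simp)
    exact ha.mul hb
  have d3 : HasDerivAt (fun u : ℝ => (u^2-1) * Real.log (u+1))
      ((2*u) * Real.log (u+1) + (u^2-1) * (1/(u+1))) u := by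
    have ha : HasDerivAt (fun u : ℝ => u^2 - 1) (2*u) u := by
      have := (hasDerivAt_pow 2 u).sub_const 1
      simpa using this
    have hb : HasDerivAt (fun u : ℝ => Real.log (u+1)) (1/(u+1)) u := by
      have := ((hasDerivAt_id u).add_const 1).log hup
      simpa [one_div] using this
    exact ha.mul hb
  have := (d1.add d2).sub d3
  refine this.congr_deriv ?_
  unfold P1
  field_simp
  ring

lemma hasDerivAt_P1 {u : ℝ} (hu : 1 < u) : HasDerivAt P1 (P2 u) u := by
  have hu0 : u ≠ 0 := by linarith
  have hum' : (0:ℝ) < u - 1 := by linarith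
  have hum : u - 1 ≠ 0 := ne_of_gt hum'
  have hup : u + 1 ≠ 0 := by linarith
  have d1 : HasDerivAt (fun u : ℝ => (4*u - Φr) * Real.log u)
      (4 * Real.log u + (4*u - Φr) * (1/u)) u := by
    have ha : HasDerivAt (fun u : ℝ => 4*u - Φr) (4:ℝ) u := by
      have := ((hasDerivAt_id u).const_mul 4).sub_const Φr
      simpa using this
    have hb : HasDerivAt Real.log (1/u) u := by
      simpa [one_div] using Real.hasDerivAt_log hu0
    exact ha.mul hb
  have d2 : HasDerivAt (fun u : ℝ => (Φr - 2*u) * Real.log (u-1))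
      ((-2) * Real.log (u-1) + (Φr - 2*u) * (1/(u-1))) u := by
    have ha : HasDerivAt (fun u : ℝ => Φr - 2*u) (-2:ℝ) u := by
      have := ((hasDerivAt_id u).const_mul 2).const_sub Φr
      simpa using this
    have hb : HasDerivAt (fun u : ℝ => Real.log (u-1)) (1/(u-1)) u := by
      have := ((hasDerivAt_id u).sub_const 1).log hum
      simpa [one_div] using this
    exact ha.mul hb
  have d3 : HasDerivAt (fun u : ℝ => 2*u * Real.log (u+1))
      (2 * Real.log (u+1) + 2*u * (1/(u+1))) u := by
    have ha : HasDerivAt (fun u : ℝ => 2*u) (2:ℝ) u := by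
      simpa using (hasDerivAt_id u).const_mul (2:ℝ)
    have hb : HasDerivAt (fun u : ℝ => Real.log (u+1)) (1/(u+1)) u := by
      have := ((hasDerivAt_id u).add_const 1).log hup
      simpa [one_div] using this
    exact ha.mul hb
  have := (d1.add d2).sub d3
  refine this.congr_deriv ?_
  unfold P2
  have hq : u^2 - u ≠ 0 := by
    have h : u^2 - u = u*(u-1) := by ring
    rw [h]; exact mul_ne_zero hu0 hum
  field_simp
  ring

lemma hasDerivAt_P2 {u : ℝ} (hu : 1 < u) : HasDerivAt P2 (P3 u) u := by
  have hu0 : u ≠ 0 := by linarith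
  have hum' : (0:ℝ) < u - 1 := by linarith
  have hum : u - 1 ≠ 0 := ne_of_gt hum'
  have hup : u + 1 ≠ 0 := by linarith
  have hq : u^2 - u ≠ 0 := by
    have : u^2 - u = u*(u-1) := by ring
    rw [this]; exact mul_ne_zero hu0 hum
  have d1 : HasDerivAt (fun u : ℝ => 4*Real.log u) (4 * (1/u)) u := by
    have hb : HasDerivAt Real.log (1/u) u := by
      simpa [one_div] using Real.hasDerivAt_log hu0
    simpa using hb.const_mul 4
  have d2 : HasDerivAt (fun u : ℝ => 2*Real.log (u-1)) (2 * (1/(u-1))) u := by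
    have hb : HasDerivAt (fun u : ℝ => Real.log (u-1)) (1/(u-1)) u := by
      have := ((hasDerivAt_id u).sub_const 1).log hum
      simpa [one_div] using this
    simpa using hb.const_mul 2
  have d3 : HasDerivAt (fun u : ℝ => 2*Real.log (u+1)) (2 * (1/(u+1))) u := by
    have hb : HasDerivAt (fun u : ℝ => Real.log (u+1)) (1/(u+1)) u := by
      have := ((hasDerivAt_id u).add_const 1).log hup
      simpa [one_div] using this
    simpa using hb.const_mul 2
  have d4 : HasDerivAt (fun u : ℝ => (2*u^2-4*u+Φr)/(u^2-u))
      (((2*(2*u)-4)*(u^2-u) - (2*u^2-4*u+Φr)*(2*u-1))/(u^2-u)^2) u := by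
    have ha : HasDerivAt (fun u : ℝ => 2*u^2-4*u+Φr) (2*(2*u)-4) u := by
      have := (((hasDerivAt_pow 2 u).const_mul 2).sub ((hasDerivAt_id u).const_mul 4)).add_const Φr
      simpa using this
    have hb : HasDerivAt (fun u : ℝ => u^2-u) (2*u-1) u := by
      have := (hasDerivAt_pow 2 u).sub (hasDerivAt_id u)
      exact this.congr_deriv (by simp)
    exact ha.div hb hq
  have d5 : HasDerivAt (fun u : ℝ => 2*u/(u+1)) ((2*(u+1) - 2*u*1)/(u+1)^2) u := by
    have ha : HasDerivAt (fun u : ℝ => 2*u) (2:ℝ) u := by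
      simpa using (hasDerivAt_id u).const_mul (2:ℝ)
    have hb : HasDerivAt (fun u : ℝ => u+1) (1:ℝ) u := by
      simpa using (hasDerivAt_id u).add_const 1
    exact ha.div hb hup
  have := (((d1.sub d2).sub d3).add d4).sub d5
  refine this.congr_deriv ?_
  unfold P3
  have hq2 : u^2 - 1 ≠ 0 := by
    have h : u^2 - 1 = (u-1)*(u+1) := by ring
    rw [h]; exact mul_ne_zero hum hup
  field_simp
  ring

lemma Phi_inv : Φr - 1 = Φr⁻¹ := by
  have h : (Φr - 1) * Φr = 1 := by nlinarith [Phi_sq]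
  rw [inv_eq_one_div, eq_div_iff (ne_of_gt Phi_pos)]
  exact h

lemma log_Phi_sub_one : Real.log (Φr - 1) = - Real.log Φr := by
  rw [Phi_inv, Real.log_inv]

lemma log_Phi_add_one : Real.log (Φr + 1) = 2 * Real.log Φr := by
  rw [← Phi_sq, sq, Real.log_mul (ne_of_gt Phi_pos) (ne_of_gt Phi_pos)]; ring

lemma Pf_Phi : Pf Φr = 0 := by
  unfold Pf
  rw [log_Phi_sub_one, log_Phi_add_one]
  nlinarith [Phi_sq, Real.log_pos one_lt_Phi]

lemma P1_Phi : P1 Φr = 0 := by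
  unfold P1
  rw [log_Phi_sub_one, log_Phi_add_one]
  ring

lemma Pf_one : Pf 1 = 0 := by
  unfold Pf
  norm_num

-- glue helpers
lemma monoIcc {a b : ℝ} {f f' : ℝ → ℝ}
    (hd : ∀ x ∈ Set.Icc a b, HasDerivAt f (f' x) x)
    (h0 : ∀ x ∈ Set.Ioo a b, 0 ≤ f' x) : MonotoneOn f (Set.Icc a b) := by
  apply monotoneOn_of_deriv_nonneg (convex_Icc a b)
    (fun x hx => (hd x hx).continuousAt.continuousWithinAt)
  · intro x hx; rw [interior_Icc] at hx
    exact (hd x (Ioo_subset_Icc_self hx)).differentiableAt.differentiableWithinAt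
  · intro x hx; rw [interior_Icc] at hx
    rw [(hd x (Ioo_subset_Icc_self hx)).deriv]; exact h0 x hx

lemma antiIcc {a b : ℝ} {f f' : ℝ → ℝ}
    (hd : ∀ x ∈ Set.Icc a b, HasDerivAt f (f' x) x)
    (h0 : ∀ x ∈ Set.Ioo a b, f' x ≤ 0) : AntitoneOn f (Set.Icc a b) := by
  apply antitoneOn_of_deriv_nonpos (convex_Icc a b)
    (fun x hx => (hd x hx).continuousAt.continuousWithinAt)
  · intro x hx; rw [interior_Icc] at hx
    exact (hd x (Ioo_subset_Icc_self hx)).differentiableAt.differentiableWithinAt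
  · intro x hx; rw [interior_Icc] at hx
    rw [(hd x (Ioo_subset_Icc_self hx)).deriv]; exact h0 x hx

-- S6 : tail
lemma P1_nonneg_tail {u : ℝ} (hu : 3 ≤ u) : 0 ≤ P1 u := by
  have hum : (0:ℝ) < u - 1 := by linarith
  have hu0 : (0:ℝ) < u := by linarith
  have b1 : 2/(2*u-1) ≤ Real.log u - Real.log (u-1) := by
    have l1 : Real.log u - Real.log (u-1) = Real.log (1 + 1/(u-1)) := by
      rw [← Real.log_div (by linarith) (ne_of_gt hum)]
      congr 1; field_simp; ring
    rw [l1]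
    have h := pade_le_log (t := 1/(u-1)) (by positivity)
    have he : 2*(1/(u-1))/(2+1/(u-1)) = 2/(2*u-1) := by
      rw [div_eq_div_iff (by positivity) (by linarith)]
      field_simp; ring
    rw [he] at h; exact h
  have b2 : Real.log (u+1) - Real.log u ≤ (2*u+1)/(2*u*(u+1)) := by
    have l2 : Real.log (u+1) - Real.log u = Real.log (1 + 1/u) := by
      rw [← Real.log_div (by linarith) (by linarith)]
      congr 1; field_simp
    rw [l2]
    have h := log_le_pade (t := 1/u) (by positivity)
    have he : (1/u)*(2+1/u)/(2+2*(1/u)) = (2*u+1)/(2*u*(u+1)) := by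
      rw [div_eq_div_iff (by positivity) (by positivity)]
      field_simp
    rw [he] at h; exact h
  have hP : P1 u = (2*u-Φr)*(Real.log u - Real.log (u-1)) - 2*u*(Real.log (u+1) - Real.log u) := by
    unfold P1; ring
  have hc : (0:ℝ) < 2*u-Φr := by nlinarith [Phi_ub]
  have e1 : (2*u-Φr) * (2/(2*u-1)) ≤ (2*u-Φr)*(Real.log u - Real.log (u-1)) :=
    mul_le_mul_of_nonneg_left b1 (le_of_lt hc)
  have e2 : 2*u*(Real.log (u+1) - Real.log u) ≤ 2*u*((2*u+1)/(2*u*(u+1))) :=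
    mul_le_mul_of_nonneg_left b2 (by linarith)
  have e3 : 2*u*((2*u+1)/(2*u*(u+1))) ≤ (2*u-Φr) * (2/(2*u-1)) := by
    have h1 : 2*u*((2*u+1)/(2*u*(u+1))) = (2*u+1)/(u+1) := by
      rw [eq_div_iff (by linarith)]
      field_simp
    have h21 : 2*u-1 ≠ 0 := by linarith
    have h2 : (2*u-Φr) * (2/(2*u-1)) = (4*u-2*Φr)/(2*u-1) := by
      field_simp; ring
    rw [h1, h2, div_le_div_iff₀ (by linarith) (by linarith)]
    nlinarith [Phi_ub]
  rw [hP]; linarith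

-- S2 : P3 ≥ 0 on [9/8, 27/20]
lemma P3_nonneg_mid {u : ℝ} (h1 : 9/8 ≤ u) (h2 : u ≤ 27/20) : 0 ≤ P3 u := by
  have hu1 : (1:ℝ) < u := by linarith
  have key : 0 ≤ 4*u*(u-1)^2*(u+1)^2 - 4*u^3*((u-1)*(u+1))
      + (2*u^2-2*Φr*u+Φr)*(u+1)^2 - 2*u^2*(u-1)^2 := by
    have hc : 0 ≤ 4*u*(u-1)^2*(u+1)^2 - 4*u^3*((u-1)*(u+1))
        + (2*u^2-2*(1.6180340:ℝ)*u+1.6180340)*(u+1)^2 - 2*u^2*(u-1)^2 := by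
      nlinarith [mul_nonneg (sub_nonneg.2 h1) (sub_nonneg.2 h2), sq_nonneg (u-9/8),
        sq_nonneg (27/20-u), sq_nonneg (u-1.2),
        mul_nonneg (mul_nonneg (sub_nonneg.2 h1) (sub_nonneg.2 h2)) (sq_nonneg (u-1))]
    nlinarith [Phi_ub, hc, sq_nonneg (u+1), mul_nonneg (mul_nonneg (show (0:ℝ) ≤ 2*u-1 by linarith) (sq_nonneg (u+1))) (sub_nonneg.2 (le_of_lt Phi_ub))]
  have hrw : P3 u = (4*u*(u-1)^2*(u+1)^2 - 4*u^3*((u-1)*(u+1))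
      + (2*u^2-2*Φr*u+Φr)*(u+1)^2 - 2*u^2*(u-1)^2) / (u^2*(u-1)^2*(u+1)^2) := by
    unfold P3
    have hne1 : u ≠ 0 := by linarith
    have hne2 : u - 1 ≠ 0 := by linarith
    have hne3 : u + 1 ≠ 0 := by linarith
    have hne4 : u^2 - 1 ≠ 0 := by
      have : u^2-1 = (u-1)*(u+1) := by ring
      rw [this]; exact mul_ne_zero hne2 hne3
    have hne5 : u^2 - u ≠ 0 := by
      have : u^2-u = u*(u-1) := by ring
      rw [this]; exact mul_ne_zero hne1 hne2
    field_simp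
    ring
  rw [hrw]
  apply div_nonneg key
  positivity

-- S5 : P2 ≥ 0 on [27/20, 3]
lemma P2_nonneg_right {u : ℝ} (h1 : 27/20 ≤ u) (h2 : u ≤ 3) : 0 ≤ P2 u := by
  have hum : (0:ℝ) < u - 1 := by linarith
  have hu0 : (0:ℝ) < u := by linarith
  have hz : (0:ℝ) < u^2 - 1 := by nlinarith
  have llog : 4*Real.log u - 2*Real.log (u-1) - 2*Real.log (u+1)
      = 2*Real.log (1 + 1/(u^2-1)) := by
    have e1 : Real.log (u^2) = 2*Real.log u := by
      rw [sq, Real.log_mul (by linarith) (by linarith)]; ring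
    have e2 : Real.log (u^2-1) = Real.log (u-1) + Real.log (u+1) := by
      have : u^2-1 = (u-1)*(u+1) := by ring
      rw [this, Real.log_mul (ne_of_gt hum) (by linarith)]
    have e3 : Real.log (1 + 1/(u^2-1)) = Real.log (u^2) - Real.log (u^2-1) := by
      rw [← Real.log_div (by positivity) (ne_of_gt hz)]
      congr 1
      field_simp
      ring
    rw [e3, e1, e2]; ring
  have bnd : 4/(2*u^2-1) ≤ 2*Real.log (1 + 1/(u^2-1)) := by
    have h := pade_le_log (t := 1/(u^2-1)) (by positivity)
    have he : 2*(1/(u^2-1))/(2+1/(u^2-1)) = 2/(2*u^2-1) := by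
      rw [div_eq_div_iff (by positivity) (by nlinarith)]
      field_simp; ring
    rw [he] at h
    have h4 : 4/(2*u^2-1) = 2*(2/(2*u^2-1)) := by ring
    rw [h4]
    linarith
  have key : 0 ≤ 4*(u^2-u)*(u+1) + (2*u^2-4*u+Φr)*((2*u^2-1)*(u+1))
      - 2*u*((2*u^2-1)*(u^2-u)) := by
    have hc : 0 ≤ 4*(u^2-u)*(u+1) + (2*u^2-4*u+(1.6180339:ℝ))*((2*u^2-1)*(u+1))
        - 2*u*((2*u^2-1)*(u^2-u)) := by
      nlinarith [mul_nonneg (sub_nonneg.2 h1) (sub_nonneg.2 h2), sq_nonneg (u-27/20),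
        sq_nonneg (3-u), sq_nonneg (u-2),
        mul_nonneg (mul_nonneg (sub_nonneg.2 h1) (sub_nonneg.2 h2)) (sq_nonneg (u-2))]
    nlinarith [Phi_lb, hc, mul_nonneg (mul_nonneg (show (0:ℝ) ≤ 2*u^2-1 by nlinarith) (show (0:ℝ) ≤ u+1 by linarith)) (sub_nonneg.2 (le_of_lt Phi_lb))]
  have hrat : -(4/(2*u^2-1)) ≤ (2*u^2-4*u+Φr)/(u^2-u) - 2*u/(u+1) := by
    have hne5 : (0:ℝ) < u^2 - u := by nlinarith
    have h21 : (0:ℝ) < 2*u^2-1 := by nlinarith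
    have expand : (2*u^2-4*u+Φr)/(u^2-u) - 2*u/(u+1) + 4/(2*u^2-1)
        = (4*(u^2-u)*(u+1) + (2*u^2-4*u+Φr)*((2*u^2-1)*(u+1))
          - 2*u*((2*u^2-1)*(u^2-u))) / ((2*u^2-1)*(u^2-u)*(u+1)) := by
      field_simp
      ring
    have : 0 ≤ (2*u^2-4*u+Φr)/(u^2-u) - 2*u/(u+1) + 4/(2*u^2-1) := by
      rw [expand]
      apply div_nonneg key
      positivity
    linarith
  unfold P2
  have : 4*Real.log u - 2*Real.log (u-1) - 2*Real.log (u+1) ≥ 4/(2*u^2-1) := by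
    rw [llog]; exact bnd
  linarith

-- S1 : P2 ≤ 0 on (1, 9/8]
lemma P2_nonpos_left {u : ℝ} (h1 : 1 < u) (h2 : u ≤ 9/8) : P2 u ≤ 0 := by
  have hum : (0:ℝ) < u - 1 := by linarith
  have hu0 : (0:ℝ) < u := by linarith
  have hz : (0:ℝ) < u^2 - 1 := by nlinarith
  -- log decomposition
  have e2 : Real.log (u-1) + Real.log (u+1) = Real.log (u^2-1) := by
    have : u^2-1 = (u-1)*(u+1) := by ring
    rw [this, Real.log_mul (ne_of_gt hum) (by linarith)]
  -- 4 log u ≤ 4(u-1)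
  have b1 : Real.log u ≤ u - 1 := by
    have := Real.log_le_sub_one_of_pos hu0
    linarith
  -- -2 log(u^2-1) ≤ 2 log(64/17) + 17/(32(u^2-1)) - 2
  have b2 : -(2*Real.log (u^2-1)) ≤ 2*Real.log ((64:ℝ)/17) + 17/(32*(u^2-1)) - 2 := by
    have h64 : (0:ℝ) < (64/17)*(u^2-1) := by positivity
    have hlog : 1 - 1/((64/17)*(u^2-1)) ≤ Real.log ((64/17)*(u^2-1)) := one_sub_inv_le_log h64
    have hsplit : Real.log ((64/17)*(u^2-1)) = Real.log ((64:ℝ)/17) + Real.log (u^2-1) := by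
      rw [Real.log_mul (by norm_num) (ne_of_gt hz)]
    have hinv : 1/((64/17)*(u^2-1)) = 17/(64*(u^2-1)) := by
      rw [div_eq_div_iff (by positivity) (by positivity)]
      ring
    rw [hsplit, hinv] at hlog
    have : 17/(32*(u^2-1)) = 2*(17/(64*(u^2-1))) := by
      rw [eq_div_iff (by positivity)] at *
      field_simp
      ring
    rw [this]
    linarith
  -- log(64/17) = 2 log 2 - log(17/16)
  have b3 : Real.log ((64:ℝ)/17) = 2*Real.log 2 - Real.log ((17:ℝ)/16) := by
    have h1 : ((64:ℝ)/17) = 2^2 / ((17:ℝ)/16) := by norm_num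
    rw [h1, Real.log_div (by norm_num) (by norm_num), Real.log_pow]
    push_cast; ring
  have b4 : (2:ℝ)/33 ≤ Real.log ((17:ℝ)/16) := by
    have h := pade_le_log (t := (1:ℝ)/16) (by norm_num)
    have : (1:ℝ) + 1/16 = 17/16 := by norm_num
    rw [this] at h
    have he : 2*((1:ℝ)/16)/(2+1/16) = 2/33 := by norm_num
    rw [he] at h; exact h
  have l2u : Real.log 2 < 0.6931471808 := Real.log_two_lt_d9
  -- rational term bound
  have b5 : 17/(32*(u^2-1)) + (2*u^2-4*u+Φr)/(u^2-u) ≤ -(9/20) := by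
    have hne5 : (0:ℝ) < u^2 - u := by nlinarith
    have expand : 17/(32*(u^2-1)) + (2*u^2-4*u+Φr)/(u^2-u)
        = (17*u + 32*(2*u^2-4*u+Φr)*(u+1)) / (32*(u*(u-1)*(u+1))) := by
      field_simp
      ring
    rw [expand, div_le_iff₀ (by positivity)]
    nlinarith [Phi_lb, Phi_ub, mul_pos (mul_pos hu0 hum) (show (0:ℝ) < u+1 by linarith),
      sq_nonneg (u-1), mul_nonneg (sub_nonneg.2 (le_of_lt h1)) (sub_nonneg.2 h2)]
  have b6 : -(2*u/(u+1)) ≤ -1 := by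
    rw [neg_le_neg_iff, le_div_iff₀ (show (0:ℝ) < u+1 by linarith)]
    linarith
  unfold P2
  have hP2 : 4*Real.log u - 2*Real.log (u-1) - 2*Real.log (u+1)
      + (2*u^2-4*u+Φr)/(u^2-u) - 2*u/(u+1)
      = 4*Real.log u - 2*Real.log (u^2-1)
      + ((2*u^2-4*u+Φr)/(u^2-u)) - 2*u/(u+1) := by
    rw [← e2]; ring
  rw [hP2]
  nlinarith [b1, b2, b3, b4, b5, b6, l2u]

-- log value bounds
lemma log98_lb : (2:ℝ)/17 ≤ Real.log ((9:ℝ)/8) := by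
  have h := pade_le_log (t := (1:ℝ)/8) (by norm_num)
  rw [show (1:ℝ) + 1/8 = 9/8 by norm_num] at h
  rw [show (2:ℝ)*(1/8)/(2+1/8) = 2/17 by norm_num] at h
  exact h

lemma log98_ub : Real.log ((9:ℝ)/8) ≤ 17/144 := by
  have h := log_le_pade (t := (1:ℝ)/8) (by norm_num)
  rw [show (1:ℝ) + 1/8 = 9/8 by norm_num] at h
  rw [show ((1:ℝ)/8)*(2+1/8)/(2+2*(1/8)) = 17/144 by norm_num] at h
  exact h

lemma log1716_lb : (2:ℝ)/33 ≤ Real.log ((17:ℝ)/16) := by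
  have h := pade_le_log (t := (1:ℝ)/16) (by norm_num)
  rw [show (1:ℝ) + 1/16 = 17/16 by norm_num] at h
  rw [show (2:ℝ)*(1/16)/(2+1/16) = 2/33 by norm_num] at h
  exact h

lemma log1716_ub : Real.log ((17:ℝ)/16) ≤ 33/544 := by
  have h := log_le_pade (t := (1:ℝ)/16) (by norm_num)
  rw [show (1:ℝ) + 1/16 = 17/16 by norm_num] at h
  rw [show ((1:ℝ)/16)*(2+1/16)/(2+2*(1/16)) = 33/544 by norm_num] at h
  exact h

lemma log2524_lb : (2:ℝ)/49 ≤ Real.log ((25:ℝ)/24) := by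
  have h := pade_le_log (t := (1:ℝ)/24) (by norm_num)
  rw [show (1:ℝ) + 1/24 = 25/24 by norm_num] at h
  rw [show (2:ℝ)*(1/24)/(2+1/24) = 2/49 by norm_num] at h
  exact h

lemma log2524_ub : Real.log ((25:ℝ)/24) ≤ 49/1200 := by
  have h := log_le_pade (t := (1:ℝ)/24) (by norm_num)
  rw [show (1:ℝ) + 1/24 = 25/24 by norm_num] at h
  rw [show ((1:ℝ)/24)*(2+1/24)/(2+2*(1/24)) = 49/1200 by norm_num] at h
  exact h

lemma log4948_lb : (2:ℝ)/97 ≤ Real.log ((49:ℝ)/48) := by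
  have h := pade_le_log (t := (1:ℝ)/48) (by norm_num)
  rw [show (1:ℝ) + 1/48 = 49/48 by norm_num] at h
  rw [show (2:ℝ)*(1/48)/(2+1/48) = 2/97 by norm_num] at h
  exact h

lemma log4948_ub : Real.log ((49:ℝ)/48) ≤ 97/4704 := by
  have h := log_le_pade (t := (1:ℝ)/48) (by norm_num)
  rw [show (1:ℝ) + 1/48 = 49/48 by norm_num] at h
  rw [show ((1:ℝ)/48)*(2+1/48)/(2+2*(1/48)) = 97/4704 by norm_num] at h
  exact h

lemma log4740_lb : (14:ℝ)/87 ≤ Real.log ((47:ℝ)/40) := by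
  have h := pade_le_log (t := (7:ℝ)/40) (by norm_num)
  rw [show (1:ℝ) + 7/40 = 47/40 by norm_num] at h
  rw [show (2:ℝ)*(7/40)/(2+7/40) = 14/87 by norm_num] at h
  exact h

lemma log4740_ub : Real.log ((47:ℝ)/40) ≤ 609/3760 := by
  have h := log_le_pade (t := (7:ℝ)/40) (by norm_num)
  rw [show (1:ℝ) + 7/40 = 47/40 by norm_num] at h
  rw [show ((7:ℝ)/40)*(2+7/40)/(2+2*(7/40)) = 609/3760 by norm_num] at h
  exact h

lemma log3_eq : Real.log 3 = (3*Real.log 2 + Real.log ((9:ℝ)/8))/2 := by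
  have h : Real.log ((9:ℝ)/8) = 2*Real.log 3 - 3*Real.log 2 := by
    rw [show ((9:ℝ)/8) = (3:ℝ)^(2:ℕ)/(2:ℝ)^(3:ℕ) by norm_num,
      Real.log_div (by norm_num) (by norm_num), Real.log_pow, Real.log_pow]
    push_cast; ring
  linarith

lemma log5_eq : Real.log 5 = (3*Real.log 2 + Real.log 3 + Real.log ((25:ℝ)/24))/2 := by
  have h : Real.log ((25:ℝ)/24) = 2*Real.log 5 - 3*Real.log 2 - Real.log 3 := by
    rw [show ((25:ℝ)/24) = (5:ℝ)^(2:ℕ)/((2:ℝ)^(3:ℕ)*3) by norm_num,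
      Real.log_div (by norm_num) (by norm_num), Real.log_mul (by norm_num) (by norm_num),
      Real.log_pow, Real.log_pow]
    push_cast; ring
  linarith

lemma log7_eq : Real.log 7 = (4*Real.log 2 + Real.log 3 + Real.log ((49:ℝ)/48))/2 := by
  have h : Real.log ((49:ℝ)/48) = 2*Real.log 7 - 4*Real.log 2 - Real.log 3 := by
    rw [show ((49:ℝ)/48) = (7:ℝ)^(2:ℕ)/((2:ℝ)^(4:ℕ)*3) by norm_num,
      Real.log_div (by norm_num) (by norm_num), Real.log_mul (by norm_num) (by norm_num),
      Real.log_pow, Real.log_pow]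
    push_cast; ring
  linarith

lemma P1_val_98 : P1 (9/8) ≤ 0 := by
  have e1 : Real.log ((9:ℝ)/8 - 1) = -(3*Real.log 2) := by
    rw [show ((9:ℝ)/8 - 1) = ((2:ℝ)^(3:ℕ))⁻¹ by norm_num, Real.log_inv, Real.log_pow]
    push_cast; ring
  have e2 : Real.log ((9:ℝ)/8 + 1) = Real.log 2 + Real.log ((17:ℝ)/16) := by
    rw [show ((9:ℝ)/8 + 1) = 2*((17:ℝ)/16) by norm_num,
      Real.log_mul (by norm_num) (by norm_num)]
  unfold P1
  rw [e1, e2]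
  have l2l := Real.log_two_gt_d9
  have l2u := Real.log_two_lt_d9
  have t1 : (4*((9:ℝ)/8) - Φr) * Real.log ((9:ℝ)/8) ≤ (4.5 - 1.6180339) * (17/144) := by
    apply mul_le_mul (by nlinarith [Phi_lb]) log98_ub (by linarith [log98_lb]) (by norm_num)
  nlinarith [Phi_lb, Phi_ub, log1716_lb, t1]

lemma P1_val_2720 : P1 (27/20) ≤ 0 := by
  have l2l := Real.log_two_gt_d9
  have l2u := Real.log_two_lt_d9
  -- bounds on log 3, log 5, log 7
  have l3l : (1.0985442:ℝ) ≤ Real.log 3 := by rw [log3_eq]; linarith [log98_lb]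
  have l3u : Real.log 3 ≤ 1.0987486 := by rw [log3_eq]; linarith [log98_ub]
  have l5l : (1.6094010:ℝ) ≤ Real.log 5 := by rw [log5_eq]; linarith [log2524_lb, l3l]
  have l5u : Real.log 5 ≤ 1.6095118 := by rw [log5_eq]; linarith [log2524_ub, l3u]
  have l7l : (1.9458757:ℝ) ≤ Real.log 7 := by rw [log7_eq]; linarith [log4948_lb, l3l]
  have l7u : Real.log 7 ≤ 1.9459791 := by rw [log7_eq]; linarith [log4948_ub, l3u]
  -- the three logs
  have eA : Real.log ((27:ℝ)/20) = 3*Real.log 3 - 2*Real.log 2 - Real.log 5 := by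
    rw [show ((27:ℝ)/20) = (3:ℝ)^(3:ℕ)/((2:ℝ)^(2:ℕ)*5) by norm_num,
      Real.log_div (by norm_num) (by norm_num), Real.log_mul (by norm_num) (by norm_num),
      Real.log_pow, Real.log_pow]
    push_cast; ring
  have eB : Real.log ((7:ℝ)/20) = Real.log 7 - 2*Real.log 2 - Real.log 5 := by
    rw [show ((7:ℝ)/20) = 7/((2:ℝ)^(2:ℕ)*5) by norm_num,
      Real.log_div (by norm_num) (by norm_num), Real.log_mul (by norm_num) (by norm_num),
      Real.log_pow]
    push_cast; ring
  have eC : Real.log ((47:ℝ)/20) = Real.log 2 + Real.log ((47:ℝ)/40) := by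
    rw [show ((47:ℝ)/20) = 2*((47:ℝ)/40) by norm_num,
      Real.log_mul (by norm_num) (by norm_num)]
  have hA_ub : Real.log ((27:ℝ)/20) ≤ 0.3005505 := by rw [eA]; linarith
  have hA_lb : (0.29982:ℝ) ≤ Real.log ((27:ℝ)/20) := by rw [eA]; linarith
  have hB_ub : Real.log ((7:ℝ)/20) ≤ -1.0497162 := by rw [eB]; linarith
  have hB_lb : (-1.0499305:ℝ) ≤ Real.log ((7:ℝ)/20) := by rw [eB]; linarith
  have hC_lb : (0.8540667:ℝ) ≤ Real.log ((47:ℝ)/20) := by rw [eC]; linarith [log4740_lb]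
  unfold P1
  have e1 : (27:ℝ)/20 - 1 = 7/20 := by norm_num
  have e2 : (27:ℝ)/20 + 1 = 47/20 := by norm_num
  rw [e1, e2]
  have t1 : (4*((27:ℝ)/20) - Φr) * Real.log ((27:ℝ)/20) ≤ (27/5 - 1.6180339) * 0.3005505 := by
    apply mul_le_mul (by nlinarith [Phi_lb]) hA_ub (by linarith) (by norm_num)
  have t2 : (Φr - 2*((27:ℝ)/20)) * Real.log ((7:ℝ)/20) ≤ 1.0819661 * 1.0499305 := by
    have hr : (Φr - 2*((27:ℝ)/20)) * Real.log ((7:ℝ)/20)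
        = (27/10 - Φr) * (-(Real.log ((7:ℝ)/20))) := by ring
    rw [hr]
    apply mul_le_mul (by nlinarith [Phi_lb]) (by linarith) (by linarith [hB_ub]) (by norm_num)
  nlinarith [t1, t2, hC_lb]

-- quasiconvexity of P1 on [9/8, 27/20]
lemma P1_nonpos_mid {u : ℝ} (ha : 9/8 ≤ u) (hb : u ≤ 27/20) : P1 u ≤ 0 := by
  have hmono : MonotoneOn P2 (Set.Icc (9/8 : ℝ) (27/20)) :=
    monoIcc (fun x hx => hasDerivAt_P2 (by have := hx.1; linarith))
      (fun x hx => P3_nonneg_mid (le_of_lt hx.1) (le_of_lt hx.2))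
  by_cases hc : P2 u ≤ 0
  · have hanti : AntitoneOn P1 (Set.Icc (9/8 : ℝ) u) := by
      apply antiIcc (fun x hx => hasDerivAt_P1 (by have := hx.1; linarith))
      intro x hx
      have hx1 : x ∈ Set.Icc (9/8 : ℝ) (27/20) := ⟨le_of_lt hx.1, by linarith [hx.2]⟩
      have hu1 : u ∈ Set.Icc (9/8 : ℝ) (27/20) := ⟨ha, hb⟩
      exact le_trans (hmono hx1 hu1 (le_of_lt hx.2)) hc
    have h := hanti (Set.left_mem_Icc.2 ha) ⟨ha, le_refl u⟩ ha
    exact le_trans h P1_val_98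
  · push_neg at hc
    have hmono1 : MonotoneOn P1 (Set.Icc u (27/20 : ℝ)) := by
      apply monoIcc (fun x hx => hasDerivAt_P1 (by have := hx.1; linarith))
      intro x hx
      have hx1 : x ∈ Set.Icc (9/8 : ℝ) (27/20) := ⟨by linarith [hx.1], le_of_lt hx.2⟩
      have hu1 : u ∈ Set.Icc (9/8 : ℝ) (27/20) := ⟨ha, hb⟩
      exact le_of_lt (lt_of_lt_of_le hc (hmono hu1 hx1 (le_of_lt hx.1)))
    have h := hmono1 ⟨le_refl u, hb⟩ (Set.right_mem_Icc.2 hb) hb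
    exact le_trans h P1_val_2720

lemma Phi_in_interval : 27/20 ≤ Φr ∧ Φr ≤ 3 := by
  constructor <;> nlinarith [Phi_lb, Phi_ub]

-- P1 sign on [27/20, 3]
lemma P1_signs {u : ℝ} (ha : 27/20 ≤ u) (hb : u ≤ 3) :
    (u ≤ Φr → P1 u ≤ 0) ∧ (Φr ≤ u → 0 ≤ P1 u) := by
  have hmono : MonotoneOn P1 (Set.Icc (27/20 : ℝ) 3) :=
    monoIcc (fun x hx => hasDerivAt_P1 (by have := hx.1; linarith))
      (fun x hx => P2_nonneg_right (le_of_lt hx.1) (le_of_lt hx.2))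
  have hPhi : Φr ∈ Set.Icc (27/20 : ℝ) 3 := ⟨Phi_in_interval.1, Phi_in_interval.2⟩
  constructor
  · intro h
    have := hmono ⟨ha, hb⟩ hPhi h
    rw [P1_Phi] at this; exact this
  · intro h
    have := hmono hPhi ⟨ha, hb⟩ h
    rw [P1_Phi] at this; exact this

-- Pf ≥ 0 on [27/20, 3]
lemma Pf_nonneg_mid2 {u : ℝ} (ha : 27/20 ≤ u) (hb : u ≤ 3) : 0 ≤ Pf u := by
  rcases le_total u Φr with h | h
  · have hanti : AntitoneOn Pf (Set.Icc (27/20 : ℝ) Φr) := by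
      apply antiIcc (fun x hx => hasDerivAt_Pf (by have := hx.1; linarith))
      intro x hx
      exact (P1_signs (le_of_lt hx.1) (le_trans (le_of_lt hx.2) Phi_in_interval.2)).1
        (le_of_lt hx.2)
    have := hanti ⟨ha, h⟩ (Set.right_mem_Icc.2 (le_trans ha h)) h
    rw [Pf_Phi] at this; linarith
  · have hmono : MonotoneOn Pf (Set.Icc Φr (3 : ℝ)) := by
      apply monoIcc (fun x hx => hasDerivAt_Pf (by have := hx.1; nlinarith [Phi_lb]))
      intro x hx
      exact (P1_signs (le_trans Phi_in_interval.1 (le_of_lt hx.1)) (le_of_lt hx.2)).2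
        (le_of_lt hx.1)
    have := hmono (Set.left_mem_Icc.2 (le_trans h hb)) ⟨h, hb⟩ h
    rw [Pf_Phi] at this; linarith

lemma Pf_nonneg_mid1 {u : ℝ} (ha : 9/8 ≤ u) (hb : u ≤ 27/20) : 0 ≤ Pf u := by
  have hanti : AntitoneOn Pf (Set.Icc (9/8 : ℝ) (27/20)) := by
    apply antiIcc (fun x hx => hasDerivAt_Pf (by have := hx.1; linarith))
    intro x hx
    exact P1_nonpos_mid (le_of_lt hx.1) (le_of_lt hx.2)
  have h := hanti ⟨ha, hb⟩ (Set.right_mem_Icc.2 (by norm_num)) hb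
  exact le_trans (Pf_nonneg_mid2 (le_refl _) (by norm_num)) h

lemma Pf_nonneg_tail {u : ℝ} (hu : 3 ≤ u) : 0 ≤ Pf u := by
  have hmono : MonotoneOn Pf (Set.Icc (3 : ℝ) u) := by
    apply monoIcc (fun x hx => hasDerivAt_Pf (by have := hx.1; linarith))
    intro x hx
    exact P1_nonneg_tail (le_of_lt hx.1)
  have h := hmono (Set.left_mem_Icc.2 hu) ⟨hu, le_refl u⟩ hu
  exact le_trans (Pf_nonneg_mid2 (by norm_num) (le_refl _)) h

lemma Pf_contOn : ContinuousOn Pf (Set.Icc (1:ℝ) (9/8)) := by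
  unfold Pf
  apply ContinuousOn.sub
  apply ContinuousOn.add
  · apply ContinuousOn.mul (by fun_prop)
    apply ContinuousOn.log (by fun_prop)
    intro x hx
    have := hx.1; intro h; rw [h] at this; norm_num at this
  · have hc : Continuous (fun u : ℝ => (Φr - u - 1) * ((u-1) * Real.log (u-1))) := by
      apply Continuous.mul (by fun_prop)
      exact Real.continuous_mul_log.comp (continuous_id.sub continuous_const)
    exact hc.continuousOn
  · apply ContinuousOn.mul (by fun_prop)
    apply ContinuousOn.log (by fun_prop)
    intro x hx
    have := hx.1; intro h
    have : x = -1 := by linarith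
    rw [this] at hx; have := hx.1; norm_num at this

lemma Pf_concaveOn : ConcaveOn ℝ (Set.Icc (1:ℝ) (9/8)) Pf := by
  apply concaveOn_of_hasDerivWithinAt2_nonpos (convex_Icc 1 (9/8)) Pf_contOn
    (f' := P1) (f'' := P2)
  · intro x hx
    rw [interior_Icc] at hx
    exact (hasDerivAt_Pf hx.1).hasDerivWithinAt
  · intro x hx
    rw [interior_Icc] at hx
    exact (hasDerivAt_P1 hx.1).hasDerivWithinAt
  · intro x hx
    rw [interior_Icc] at hx
    exact P2_nonpos_left hx.1 (le_of_lt hx.2)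

lemma Pf_nonneg_left {u : ℝ} (ha : 1 ≤ u) (hb : u ≤ 9/8) : 0 ≤ Pf u := by
  have h := Pf_concaveOn.ge_on_segment (Set.left_mem_Icc.2 (by norm_num))
    (Set.right_mem_Icc.2 (by norm_num))
    (by rw [segment_eq_Icc (by norm_num : (1:ℝ) ≤ 9/8)]; exact ⟨ha, hb⟩)
  have h98 : 0 ≤ Pf (9/8) := Pf_nonneg_mid1 (le_refl _) (by norm_num)
  rw [Pf_one] at h
  rcases min_le_iff.1 (le_refl (min (0:ℝ) (Pf (9/8)))) with _ | _
  · calc (0:ℝ) = min 0 (Pf (9/8)) := by rw [min_eq_left h98]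
    _ ≤ Pf u := h
  · calc (0:ℝ) = min 0 (Pf (9/8)) := by rw [min_eq_left h98]
    _ ≤ Pf u := h

lemma Pf_nonneg {u : ℝ} (hu : 1 ≤ u) : 0 ≤ Pf u := by
  rcases le_total u (9/8 : ℝ) with h | h
  · exact Pf_nonneg_left hu h
  rcases le_total u (27/20 : ℝ) with h2 | h2
  · exact Pf_nonneg_mid1 h h2
  rcases le_total u (3 : ℝ) with h3 | h3
  · exact Pf_nonneg_mid2 h2 h3
  · exact Pf_nonneg_tail h3

-- concavity of Gf = phif ∘ exp
noncomputable def Gf (s : ℝ) : ℝ := Real.exp s * s - (Real.exp s - 1) * Real.log (Real.exp s - 1)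
noncomputable def Gf1 (s : ℝ) : ℝ := Real.exp s * (s - Real.log (Real.exp s - 1))
noncomputable def Gf2 (s : ℝ) : ℝ := Gf1 s - Real.exp s / (Real.exp s - 1)

lemma exp_sub_one_pos {s : ℝ} (hs : 0 < s) : 0 < Real.exp s - 1 := by
  have := Real.exp_lt_exp.2 hs
  rw [Real.exp_zero] at this
  linarith

lemma hasDerivAt_Gf {s : ℝ} (hs : 0 < s) : HasDerivAt Gf (Gf1 s) s := by
  have hne : Real.exp s - 1 ≠ 0 := ne_of_gt (exp_sub_one_pos hs)
  have d1 : HasDerivAt (fun s : ℝ => Real.exp s * s) (Real.exp s * s + Real.exp s * 1) s :=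
    (Real.hasDerivAt_exp s).mul (hasDerivAt_id s)
  have d2 : HasDerivAt (fun s : ℝ => (Real.exp s - 1) * Real.log (Real.exp s - 1))
      ((Real.log (Real.exp s - 1) + 1) * Real.exp s) s := by
    have hc : HasDerivAt (fun x : ℝ => x * Real.log x) (Real.log (Real.exp s - 1) + 1)
        (Real.exp s - 1) := Real.hasDerivAt_mul_log hne
    have hin : HasDerivAt (fun s : ℝ => Real.exp s - 1) (Real.exp s) s :=
      (Real.hasDerivAt_exp s).sub_const 1
    exact hc.comp s hin
  have := d1.sub d2
  refine this.congr_deriv ?_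
  unfold Gf1
  ring

lemma hasDerivAt_Gf1 {s : ℝ} (hs : 0 < s) : HasDerivAt Gf1 (Gf2 s) s := by
  have hne : Real.exp s - 1 ≠ 0 := ne_of_gt (exp_sub_one_pos hs)
  have d2 : HasDerivAt (fun s : ℝ => s - Real.log (Real.exp s - 1))
      (1 - Real.exp s/(Real.exp s - 1)) s := by
    have hl : HasDerivAt (fun s : ℝ => Real.log (Real.exp s - 1))
        (Real.exp s/(Real.exp s - 1)) s :=
      ((Real.hasDerivAt_exp s).sub_const 1).log hne
    exact (hasDerivAt_id s).sub hl
  have := (Real.hasDerivAt_exp s).mul d2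
  refine this.congr_deriv ?_
  unfold Gf2 Gf1
  field_simp
  ring

lemma Gf2_nonpos {s : ℝ} (hs : 0 < s) : Gf2 s ≤ 0 := by
  have hpos := exp_sub_one_pos hs
  have h1 : s - Real.log (Real.exp s - 1) = Real.log (Real.exp s/(Real.exp s - 1)) := by
    rw [Real.log_div (Real.exp_ne_zero s) (ne_of_gt hpos), Real.log_exp]
  have h2 : Real.log (Real.exp s/(Real.exp s - 1)) ≤ Real.exp s/(Real.exp s - 1) - 1 :=
    Real.log_le_sub_one_of_pos (by positivity)
  have h3 : Real.exp s/(Real.exp s - 1) - 1 = 1/(Real.exp s - 1) := by field_simp; ring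
  have h4 : Gf1 s ≤ Real.exp s * (1/(Real.exp s - 1)) := by
    unfold Gf1
    apply mul_le_mul_of_nonneg_left _ (le_of_lt (Real.exp_pos s))
    rw [h1]
    linarith [h2, h3]
  unfold Gf2
  have h5 : Real.exp s * (1/(Real.exp s - 1)) = Real.exp s / (Real.exp s - 1) := by ring
  linarith [h4, h5.ge]

lemma Gf_concave : ConcaveOn ℝ (Set.Ioi (0:ℝ)) Gf := by
  apply concaveOn_of_hasDerivWithinAt2_nonpos (convex_Ioi 0)
    (f' := Gf1) (f'' := Gf2)
  · intro x hx
    exact ((hasDerivAt_Gf hx).continuousAt).continuousWithinAt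
  · intro x hx
    rw [interior_Ioi] at hx
    exact (hasDerivAt_Gf hx).hasDerivWithinAt
  · intro x hx
    rw [interior_Ioi] at hx
    exact (hasDerivAt_Gf1 hx).hasDerivWithinAt
  · intro x hx
    rw [interior_Ioi] at hx
    exact Gf2_nonpos hx

lemma Gf_eq_phif (s : ℝ) : Gf s = phif (Real.exp s) := by
  unfold Gf phif
  rw [Real.log_exp]

/-- Midpoint concavity in multiplicative form. -/
lemma phif_midpoint {x y : ℝ} (hx0 : 0 < x) (hx1 : x < 1) (hy0 : 0 < y) (hy1 : y < 1) :
    (phif (1/x) + phif (1/y))/2 ≤ phif (1/Real.sqrt (x*y)) := by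
  set s := -Real.log x with hs
  set t := -Real.log y with ht
  have hs0 : 0 < s := by
    simp only [hs, neg_pos]
    exact Real.log_neg hx0 hx1
  have ht0 : 0 < t := by
    simp only [ht, neg_pos]
    exact Real.log_neg hy0 hy1
  have hes : Real.exp s = 1/x := by
    rw [hs, Real.exp_neg, Real.exp_log hx0, one_div]
  have het : Real.exp t = 1/y := by
    rw [ht, Real.exp_neg, Real.exp_log hy0, one_div]
  have hmid : Real.exp ((s+t)/2) = 1/Real.sqrt (x*y) := by
    have hesx : Real.exp (-s) = x := by
      rw [Real.exp_neg, hes]; simp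
    have hety : Real.exp (-t) = y := by
      rw [Real.exp_neg, het]; simp
    have hsq : x*y = (Real.exp (-((s+t)/2)))^2 := by
      rw [sq, ← Real.exp_add, show -((s+t)/2) + -((s+t)/2) = -s + -t by ring,
        Real.exp_add, hesx, hety]
    rw [hsq, Real.sqrt_sq (le_of_lt (Real.exp_pos _)), Real.exp_neg, one_div, inv_inv]
  have hc := Gf_concave.2 (Set.mem_Ioi.2 hs0) (Set.mem_Ioi.2 ht0)
    (by norm_num : (0:ℝ) ≤ 1/2) (by norm_num : (0:ℝ) ≤ 1/2) (by norm_num)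
  simp only [smul_eq_mul] at hc
  have e1 : (1:ℝ)/2 * s + 1/2 * t = (s+t)/2 := by ring
  rw [e1] at hc
  rw [Gf_eq_phif, Gf_eq_phif, Gf_eq_phif, hes, het, hmid] at hc
  linarith

/-- One-variable inequality in multiplicative form. -/
lemma phif_onevar {u : ℝ} (hu : 1 ≤ u) : Φr * phif u ≤ phif (u^2) := by
  have h := Pf_nonneg hu
  rcases eq_or_lt_of_le hu with h1 | h1
  · rw [← h1]
    unfold phif
    norm_num
  · rw [Pf_eq h1] at h
    linarith

noncomputable def ent (p : ℝ) : ℝ := -(p * Real.log p) - (1-p) * Real.log (1-p)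

lemma ent_zero : ent 0 = 0 := by unfold ent; norm_num
lemma ent_one : ent 1 = 0 := by unfold ent; norm_num

lemma ent_nonneg {p : ℝ} (h0 : 0 ≤ p) (h1 : p ≤ 1) : 0 ≤ ent p := by
  unfold ent
  have a1 := Real.mul_log_nonpos h0 h1
  have a2 := Real.mul_log_nonpos (by linarith : (0:ℝ) ≤ 1-p) (by linarith)
  linarith

lemma ent_eq_phif {x : ℝ} (hx0 : 0 < x) (hx1 : x < 1) : ent x = x * phif (1/x) := by
  unfold ent phif
  have hx' : x ≠ 0 := ne_of_gt hx0
  have h1 : Real.log (1/x) = -Real.log x := by rw [one_div, Real.log_inv]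
  have h2 : (1:ℝ)/x - 1 = (1-x)/x := by field_simp
  have h3 : Real.log ((1-x)/x) = Real.log (1-x) - Real.log x :=
    Real.log_div (by linarith) hx'
  rw [h1, h2, h3]
  field_simp
  ring

/-- Boppana's inequality, natural log version. -/
lemma boppana_nat {x y : ℝ} (hx0 : 0 ≤ x) (hx1 : x ≤ 1) (hy0 : 0 ≤ y) (hy1 : y ≤ 1) :
    Φr/2 * (y * ent x + x * ent y) ≤ ent (x*y) := by
  rcases eq_or_lt_of_le hx0 with h | hx0'
  · rw [← h]; simp [ent_zero]
  rcases eq_or_lt_of_le hy0 with h | hy0'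
  · rw [← h]; simp [ent_zero]
  have hc1 : Φr/2 ≤ 1 := by nlinarith [Phi_ub]
  have hc0 : 0 < Φr/2 := by linarith [Phi_pos]
  rcases eq_or_lt_of_le hx1 with h | hx1'
  · rw [h]
    have e : Φr/2 * (y * ent 1 + 1 * ent y) = Φr/2 * ent y := by rw [ent_one]; ring
    rw [e, one_mul]
    calc Φr/2 * ent y ≤ 1 * ent y := mul_le_mul_of_nonneg_right hc1 (ent_nonneg hy0 hy1)
    _ = ent y := one_mul _
  rcases eq_or_lt_of_le hy1 with h | hy1'
  · rw [h]
    calc Φr/2 * (1 * ent x + x * ent 1) = Φr/2 * ent x := by rw [ent_one]; ring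
    _ ≤ 1 * ent x := mul_le_mul_of_nonneg_right hc1 (ent_nonneg hx0 hx1)
    _ = ent (x*1) := by rw [one_mul, mul_one]
  -- interior case
  have hxy0 : 0 < x*y := mul_pos hx0' hy0'
  have hxy1 : x*y < 1 := by nlinarith
  have hsq0 : 0 < Real.sqrt (x*y) := Real.sqrt_pos.2 hxy0
  have hsq1 : Real.sqrt (x*y) < 1 := by
    rw [show (1:ℝ) = Real.sqrt 1 by rw [Real.sqrt_one]]
    exact Real.sqrt_lt_sqrt (le_of_lt hxy0) hxy1
  have hkey1 : ent (x*y) = (x*y) * phif (1/(x*y)) := ent_eq_phif hxy0 hxy1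
  have hpow : (1/Real.sqrt (x*y))^2 = 1/(x*y) := by
    rw [div_pow, one_pow, Real.sq_sqrt (le_of_lt hxy0)]
  have honevar : Φr * phif (1/Real.sqrt (x*y)) ≤ phif (1/(x*y)) := by
    have h := phif_onevar (u := 1/Real.sqrt (x*y))
      (by rw [le_div_iff₀ hsq0]; linarith)
    rw [hpow] at h
    exact h
  have hmid := phif_midpoint hx0' hx1' hy0' hy1'
  have hfin : Φr * ((phif (1/x) + phif (1/y))/2) ≤ phif (1/(x*y)) := by
    calc Φr * ((phif (1/x) + phif (1/y))/2) ≤ Φr * phif (1/Real.sqrt (x*y)) :=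
      mul_le_mul_of_nonneg_left hmid (le_of_lt Phi_pos)
    _ ≤ phif (1/(x*y)) := honevar
  have hmul := mul_le_mul_of_nonneg_left hfin (le_of_lt hxy0)
  rw [← hkey1] at hmul
  have hrw : (x*y) * (Φr * ((phif (1/x) + phif (1/y))/2))
      = Φr/2 * (y * (x * phif (1/x)) + x * (y * phif (1/y))) := by ring
  rw [hrw] at hmul
  rw [← ent_eq_phif hx0' hx1', ← ent_eq_phif hy0' hy1'] at hmul
  exact hmul

section Prob
open scoped Classical
variable {Ω : Type*} [Fintype Ω] (μ : Ω → ℝ)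

lemma probOf_nonneg (hμ0 : ∀ ω, 0 ≤ μ ω) (E : Ω → Prop) : 0 ≤ probOf μ E := by
  unfold probOf
  apply Finset.sum_nonneg
  intro ω _
  by_cases h : E ω <;> simp [h, hμ0 ω]

lemma probOf_congr {E F : Ω → Prop} (h : ∀ ω, E ω ↔ F ω) : probOf μ E = probOf μ F := by
  unfold probOf
  exact Finset.sum_congr rfl fun ω _ => if_congr (h ω) rfl rfl

lemma probOf_false : probOf μ (fun _ => False) = 0 := by
  unfold probOf; simp

lemma probOf_partition {V : Type*} [Fintype V] (X : Ω → V) (E : Ω → Prop) :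
    probOf μ E = ∑ v, probOf μ (fun ω => X ω = v ∧ E ω) := by
  unfold probOf
  rw [Finset.sum_comm]
  apply Finset.sum_congr rfl
  intro ω _
  by_cases h : E ω
  · simp only [h, and_true]
    rw [Finset.sum_ite_eq Finset.univ (X ω) (fun _ => μ ω)]
    simp [h]
  · simp [h]

lemma probOf_and_shift {V : Type*} [Fintype V] (X : Ω → V) (v : V) (f : V → Prop) :
    probOf μ (fun ω => X ω = v ∧ f (X ω)) = if f v then probOf μ (fun ω => X ω = v) else 0 := by
  by_cases h : f v
  · rw [if_pos h]
    apply probOf_congr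
    intro ω
    constructor
    · rintro ⟨h1, _⟩; exact h1
    · intro h1; exact ⟨h1, h1 ▸ h⟩
  · rw [if_neg h]
    rw [probOf_congr μ (F := fun _ => False) _, probOf_false]
    intro ω
    simp only [iff_false]
    rintro ⟨h1, h2⟩
    exact h (h1 ▸ h2)

lemma iteSplitMul {p q : Prop} (x y : ℝ) :
    (if p ∧ q then x * y else 0) = (if p then x else 0) * (if q then y else 0) := by
  by_cases hp : p <;> by_cases hq : q <;> simp [hp, hq]

lemma probOf_indep_pred {n : ℕ} (A B : Ω → Fin n → Bool)
    (hind : ∀ a b : Fin n → Bool,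
      probOf μ (fun ω => A ω = a ∧ B ω = b) =
        probOf μ (fun ω => A ω = a) * probOf μ (fun ω => B ω = b))
    (f g : (Fin n → Bool) → Prop) :
    probOf μ (fun ω => f (A ω) ∧ g (B ω))
      = probOf μ (fun ω => f (A ω)) * probOf μ (fun ω => g (B ω)) := by
  -- expand LHS over a and b
  have step1 : probOf μ (fun ω => f (A ω) ∧ g (B ω))
      = ∑ a, ∑ b, (if f a ∧ g b then
          probOf μ (fun ω => A ω = a ∧ B ω = b) else 0) := by
    rw [probOf_partition μ A]
    apply Finset.sum_congr rfl
    intro a _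
    have e1 : probOf μ (fun ω => A ω = a ∧ (f (A ω) ∧ g (B ω)))
        = probOf μ (fun ω => A ω = a ∧ (f a ∧ g (B ω))) := by
      apply probOf_congr; intro ω
      constructor
      · rintro ⟨rfl, hf, hg⟩; exact ⟨rfl, hf, hg⟩
      · rintro ⟨rfl, hf, hg⟩; exact ⟨rfl, hf, hg⟩
    rw [e1, probOf_partition μ B]
    apply Finset.sum_congr rfl
    intro b _
    have e2 : probOf μ (fun ω => B ω = b ∧ (A ω = a ∧ (f a ∧ g (B ω))))
        = probOf μ (fun ω => (A ω = a ∧ B ω = b) ∧ (f a ∧ g b)) := by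
      apply probOf_congr; intro ω
      constructor
      · rintro ⟨rfl, ha, hf, hg⟩; exact ⟨⟨ha, rfl⟩, hf, hg⟩
      · rintro ⟨⟨ha, rfl⟩, hf, hg⟩; exact ⟨rfl, ha, hf, hg⟩
    rw [e2]
    by_cases hc : f a ∧ g b
    · rw [if_pos hc]
      apply probOf_congr; intro ω
      simp [hc]
    · rw [if_neg hc]
      rw [probOf_congr μ (F := fun _ => False) _, probOf_false]
      intro ω
      simp only [iff_false]
      rintro ⟨_, h2⟩
      exact hc h2
  rw [step1]
  have step2 : ∀ a, ∑ b, (if f a ∧ g b then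
        probOf μ (fun ω => A ω = a ∧ B ω = b) else 0)
      = (if f a then probOf μ (fun ω => A ω = a) else 0)
        * ∑ b, (if g b then probOf μ (fun ω => B ω = b) else 0) := by
    intro a
    rw [Finset.mul_sum]
    apply Finset.sum_congr rfl
    intro b _
    rw [hind a b, iteSplitMul]
  rw [Finset.sum_congr rfl (fun a _ => step2 a), ← Finset.sum_mul]
  congr 1
  · rw [probOf_partition μ A (fun ω => f (A ω))]
    apply Finset.sum_congr rfl
    intro a _
    rw [probOf_and_shift]
  · rw [probOf_partition μ B (fun ω => g (B ω))]
    apply Finset.sum_congr rfl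
    intro b _
    rw [probOf_and_shift]

end Prob

noncomputable def Nb (a b : ℝ) : ℝ :=
  (a+b) * Real.logb 2 (a+b) - a * Real.logb 2 a - b * Real.logb 2 b

section EntropyLemmas
open scoped Classical
variable {Ω : Type*} [Fintype Ω] (μ : Ω → ℝ)

lemma condEntropy_bool {W : Type*} [Fintype W] (Z : Ω → Bool) (Y : Ω → W) :
    condEntropy μ Z Y = ∑ y, Nb (probOf μ (fun ω => Z ω = false ∧ Y ω = y))
                              (probOf μ (fun ω => Z ω = true ∧ Y ω = y)) := by
  unfold condEntropy entropy
  rw [Fintype.sum_prod_type]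
  rw [Fintype.sum_bool]
  rw [← Finset.sum_add_distrib, ← Finset.sum_sub_distrib]
  apply Finset.sum_congr rfl
  intro y _
  have e1 : ∀ z : Bool, probOf μ (fun ω => (Z ω, Y ω) = (z, y))
      = probOf μ (fun ω => Z ω = z ∧ Y ω = y) := by
    intro z
    apply probOf_congr
    intro ω
    rw [Prod.mk.injEq]
  have e2 : probOf μ (fun ω => Y ω = y)
      = probOf μ (fun ω => Z ω = true ∧ Y ω = y)
        + probOf μ (fun ω => Z ω = false ∧ Y ω = y) := by
    rw [probOf_partition μ Z (fun ω => Y ω = y), Fintype.sum_bool]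
  rw [e1 true, e1 false, e2]
  unfold Nb
  have hcomm : probOf μ (fun ω => Z ω = false ∧ Y ω = y)
      + probOf μ (fun ω => Z ω = true ∧ Y ω = y)
      = probOf μ (fun ω => Z ω = true ∧ Y ω = y)
        + probOf μ (fun ω => Z ω = false ∧ Y ω = y) := by ring
  rw [hcomm]
  ring

end EntropyLemmas

lemma Nb_zero_zero : Nb 0 0 = 0 := by unfold Nb; norm_num

lemma Nb_homog {c a b : ℝ} (hc : 0 ≤ c) (ha : 0 ≤ a) (hb : 0 ≤ b) :
    Nb (c*a) (c*b) = c * Nb a b := by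
  rcases eq_or_lt_of_le hc with h | hc'
  · rw [← h]; simp [Nb]
  rcases eq_or_lt_of_le ha with h | ha'
  · rw [← h]
    unfold Nb
    simp
  rcases eq_or_lt_of_le hb with h | hb'
  · rw [← h]
    unfold Nb
    simp
  unfold Nb
  have l1 : Real.logb 2 (c*a) = Real.logb 2 c + Real.logb 2 a :=
    Real.logb_mul (ne_of_gt hc') (ne_of_gt ha')
  have l2 : Real.logb 2 (c*b) = Real.logb 2 c + Real.logb 2 b :=
    Real.logb_mul (ne_of_gt hc') (ne_of_gt hb')
  have l3 : c*a + c*b = c*(a+b) := by ring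
  have l4 : Real.logb 2 (c*(a+b)) = Real.logb 2 c + Real.logb 2 (a+b) :=
    Real.logb_mul (ne_of_gt hc') (by positivity)
  rw [l3, l4, l1, l2]
  ring

lemma Nb_ent {w : ℝ} (h0 : 0 ≤ w) (h1 : w ≤ 1) : Nb w (1-w) = ent w / Real.log 2 := by
  unfold Nb ent
  have e0 : w + (1-w) = 1 := by ring
  rw [e0]
  simp only [Real.logb, Real.log_one]
  field_simp
  ring

lemma key2 {a0 a1 b0 b1 : ℝ} (ha0 : 0 ≤ a0) (ha1 : 0 ≤ a1) (hb0 : 0 ≤ b0) (hb1 : 0 ≤ b1) :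
    Φr/2 * (a0 * Nb b0 b1 + b0 * Nb a0 a1)
      ≤ Nb (a0*b0) ((a0+a1)*(b0+b1) - a0*b0) := by
  rcases eq_or_lt_of_le (by positivity : (0:ℝ) ≤ a0 + a1) with hsa | hsa
  · have h1 : a0 = 0 := by linarith
    have h2 : a1 = 0 := by linarith
    rw [h1, h2]
    simp [Nb_zero_zero]
  rcases eq_or_lt_of_le (by positivity : (0:ℝ) ≤ b0 + b1) with hsb | hsb
  · have h1 : b0 = 0 := by linarith
    have h2 : b1 = 0 := by linarith
    rw [h1, h2]
    simp [Nb_zero_zero]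
  set sa := a0 + a1 with hsa_def
  set sb := b0 + b1 with hsb_def
  set x := a0/sa with hx_def
  set y := b0/sb with hy_def
  have hx0 : 0 ≤ x := by positivity
  have hy0 : 0 ≤ y := by positivity
  have hx1 : x ≤ 1 := by rw [hx_def, div_le_one hsa]; linarith
  have hy1 : y ≤ 1 := by rw [hy_def, div_le_one hsb]; linarith
  have ea0 : a0 = sa * x := by rw [hx_def]; field_simp
  have ea1 : a1 = sa * (1-x) := by rw [hx_def]; field_simp; ring
  have eb0 : b0 = sb * y := by rw [hy_def]; field_simp
  have eb1 : b1 = sb * (1-y) := by rw [hy_def]; field_simp; ring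
  have hNa : Nb a0 a1 = sa * Nb x (1-x) := by
    rw [ea0, ea1]; exact Nb_homog (le_of_lt hsa) hx0 (by linarith)
  have hNb : Nb b0 b1 = sb * Nb y (1-y) := by
    rw [eb0, eb1]; exact Nb_homog (le_of_lt hsb) hy0 (by linarith)
  have hRHS : Nb (a0*b0) (sa*sb - a0*b0) = (sa*sb) * Nb (x*y) (1-x*y) := by
    have e1 : a0*b0 = (sa*sb) * (x*y) := by rw [ea0, eb0]; ring
    have e2 : sa*sb - a0*b0 = (sa*sb) * (1-x*y) := by rw [ea0, eb0]; ring
    rw [e2, e1]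
    exact Nb_homog (by positivity) (by positivity) (by nlinarith)
  rw [hRHS, hNa, hNb]
  have hcore : Φr/2 * (x * Nb y (1-y) + y * Nb x (1-x)) ≤ Nb (x*y) (1-x*y) := by
    rw [Nb_ent hx0 hx1, Nb_ent hy0 hy1, Nb_ent (by positivity) (by nlinarith)]
    have hlog2 : 0 < Real.log 2 := Real.log_pos (by norm_num)
    have eL : Φr/2 * (x * (ent y / Real.log 2) + y * (ent x / Real.log 2))
        = (Φr/2 * (y * ent x + x * ent y))/Real.log 2 := by
      rw [eq_div_iff (ne_of_gt hlog2)]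
      field_simp
      ring
    rw [eL]
    exact (div_le_div_iff_of_pos_right hlog2).2 (boppana_nat hx0 hx1 hy0 hy1)
  calc Φr/2 * (a0 * (sb * Nb y (1-y)) + b0 * (sa * Nb x (1-x)))
      = (sa*sb) * (Φr/2 * (x * Nb y (1-y) + y * Nb x (1-x))) := by
        rw [ea0, eb0]; ring
  _ ≤ (sa*sb) * Nb (x*y) (1-x*y) :=
      mul_le_mul_of_nonneg_left hcore (by positivity)

/-- If `A, B` are independent random variables with values in `{0,1}^n`, then for every
coordinate `i`,
`H((A ∪ B)_i | A_{<i}, B_{<i}) ≥ (1/(2φ)) (Pr[A_i = 0] H(B_i | B_{<i}) + Pr[B_i = 0] H(A_i | A_{<i}))`,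
where `φ = (√5-1)/2` and the union is coordinatewise. -/
theorem condEntropy_union_coord {Ω : Type*} [Fintype Ω] {n : ℕ}
    (μ : Ω → ℝ) (hμ0 : ∀ ω, 0 ≤ μ ω) (hμ1 : ∑ ω, μ ω = 1)
    (A B : Ω → Fin n → Bool)
    (hind : ∀ a b : Fin n → Bool,
      probOf μ (fun ω => A ω = a ∧ B ω = b) =
        probOf μ (fun ω => A ω = a) * probOf μ (fun ω => B ω = b))
    (i : Fin n) :
    condEntropy μ (fun ω => A ω i || B ω i)
        (fun ω => (below (A ω) i, below (B ω) i)) ≥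
      1 / (2 * ((Real.sqrt 5 - 1) / 2)) *
        (probOf μ (fun ω => A ω i = false) *
            condEntropy μ (fun ω => B ω i) (fun ω => below (B ω) i) +
          probOf μ (fun ω => B ω i = false) *
            condEntropy μ (fun ω => A ω i) (fun ω => below (A ω) i)) := by
  classical
  have hc_eq : 1 / (2 * ((Real.sqrt 5 - 1) / 2)) = Φr/2 := by
    rw [show 2 * ((Real.sqrt 5 - 1) / 2) = Real.sqrt 5 - 1 by ring]
    rw [show Φr/2 = (1 + Real.sqrt 5)/4 by unfold Φr; ring]
    rw [div_eq_div_iff (by nlinarith [s5_lb]) (by norm_num)]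
    nlinarith [s5_sq]
  -- abbreviations for the basic probabilities
  set fa : (Fin i → Bool) → ℝ :=
    fun a => probOf μ (fun ω => A ω i = false ∧ below (A ω) i = a) with hfa
  set ta : (Fin i → Bool) → ℝ :=
    fun a => probOf μ (fun ω => A ω i = true ∧ below (A ω) i = a) with hta
  set fb : (Fin i → Bool) → ℝ :=
    fun b => probOf μ (fun ω => B ω i = false ∧ below (B ω) i = b) with hfb
  set tb : (Fin i → Bool) → ℝ :=
    fun b => probOf μ (fun ω => B ω i = true ∧ below (B ω) i = b) with htb
  have hfa0 : ∀ a, 0 ≤ fa a := fun a => probOf_nonneg μ hμ0 _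
  have hta0 : ∀ a, 0 ≤ ta a := fun a => probOf_nonneg μ hμ0 _
  have hfb0 : ∀ b, 0 ≤ fb b := fun b => probOf_nonneg μ hμ0 _
  have htb0 : ∀ b, 0 ≤ tb b := fun b => probOf_nonneg μ hμ0 _
  -- conditional entropies as sums
  have condA : condEntropy μ (fun ω => A ω i) (fun ω => below (A ω) i)
      = ∑ a, Nb (fa a) (ta a) :=
    condEntropy_bool μ (fun ω => A ω i) (fun ω => below (A ω) i)
  have condB : condEntropy μ (fun ω => B ω i) (fun ω => below (B ω) i)
      = ∑ b, Nb (fb b) (tb b) :=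
    condEntropy_bool μ (fun ω => B ω i) (fun ω => below (B ω) i)
  -- joint probabilities
  have eF : ∀ a b, probOf μ (fun ω => (A ω i || B ω i) = false
        ∧ (below (A ω) i, below (B ω) i) = (a,b)) = fa a * fb b := by
    intro a b
    rw [hfa, hfb]
    rw [← probOf_indep_pred μ A B hind
      (fun v => v i = false ∧ below v i = a) (fun v => v i = false ∧ below v i = b)]
    apply probOf_congr
    intro ω
    rw [Prod.mk.injEq, Bool.or_eq_false_iff]
    tauto
  have eMA : ∀ a, probOf μ (fun ω => below (A ω) i = a) = fa a + ta a := by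
    intro a
    rw [probOf_partition μ (fun ω => A ω i) (fun ω => below (A ω) i = a), Fintype.sum_bool]
    rw [hfa, hta]
    ring
  have eMB : ∀ b, probOf μ (fun ω => below (B ω) i = b) = fb b + tb b := by
    intro b
    rw [probOf_partition μ (fun ω => B ω i) (fun ω => below (B ω) i = b), Fintype.sum_bool]
    rw [hfb, htb]
    ring
  have eX : ∀ a b, probOf μ (fun ω => (below (A ω) i, below (B ω) i) = (a,b))
      = (fa a + ta a) * (fb b + tb b) := by
    intro a b
    rw [← eMA a, ← eMB b]
    rw [← probOf_indep_pred μ A B hind (fun v => below v i = a) (fun v => below v i = b)]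
    apply probOf_congr
    intro ω
    rw [Prod.mk.injEq]
  have eT : ∀ a b, probOf μ (fun ω => (A ω i || B ω i) = true
        ∧ (below (A ω) i, below (B ω) i) = (a,b))
      = (fa a + ta a) * (fb b + tb b) - fa a * fb b := by
    intro a b
    have hpart := probOf_partition μ (fun ω => A ω i || B ω i)
      (fun ω => (below (A ω) i, below (B ω) i) = (a,b))
    rw [Fintype.sum_bool] at hpart
    have h1 := eF a b
    have h2 := eX a b
    linarith [hpart, h1, h2]
  -- the union conditional entropy
  have condU : condEntropy μ (fun ω => A ω i || B ω i)
        (fun ω => (below (A ω) i, below (B ω) i))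
      = ∑ a, ∑ b, Nb (fa a * fb b) ((fa a + ta a) * (fb b + tb b) - fa a * fb b) := by
    rw [condEntropy_bool μ (fun ω => A ω i || B ω i)
      (fun ω => (below (A ω) i, below (B ω) i))]
    rw [Fintype.sum_prod_type]
    apply Finset.sum_congr rfl
    intro a _
    apply Finset.sum_congr rfl
    intro b _
    rw [eF a b, eT a b]
  -- marginals of the i-th coordinates
  have ePA0 : probOf μ (fun ω => A ω i = false) = ∑ a, fa a := by
    rw [probOf_partition μ (fun ω => below (A ω) i) (fun ω => A ω i = false)]
    apply Finset.sum_congr rfl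
    intro a _
    rw [hfa]
    apply probOf_congr
    intro ω
    tauto
  have ePB0 : probOf μ (fun ω => B ω i = false) = ∑ b, fb b := by
    rw [probOf_partition μ (fun ω => below (B ω) i) (fun ω => B ω i = false)]
    apply Finset.sum_congr rfl
    intro b _
    rw [hfb]
    apply probOf_congr
    intro ω
    tauto
  rw [ge_iff_le, hc_eq, condA, condB, condU, ePA0, ePB0]
  -- pointwise inequality and summation
  have hpoint : ∀ a b, Φr/2 * (fa a * Nb (fb b) (tb b) + fb b * Nb (fa a) (ta a))
      ≤ Nb (fa a * fb b) ((fa a + ta a) * (fb b + tb b) - fa a * fb b) :=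
    fun a b => key2 (hfa0 a) (hta0 a) (hfb0 b) (htb0 b)
  calc Φr/2 * ((∑ a, fa a) * (∑ b, Nb (fb b) (tb b))
        + (∑ b, fb b) * (∑ a, Nb (fa a) (ta a)))
      = ∑ a, ∑ b, Φr/2 * (fa a * Nb (fb b) (tb b) + fb b * Nb (fa a) (ta a)) := by
        rw [Finset.sum_mul_sum, Finset.sum_mul_sum]
        rw [mul_add]
        rw [Finset.sum_comm (s := Finset.univ) (t := Finset.univ)
          (f := fun x y => fb x * Nb (fa y) (ta y))]
        simp only [Finset.mul_sum, ← Finset.sum_add_distrib]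
        apply Finset.sum_congr rfl
        intro a _
        apply Finset.sum_congr rfl
        intro b _
        ring
    _ ≤ ∑ a, ∑ b, Nb (fa a * fb b) ((fa a + ta a) * (fb b + tb b) - fa a * fb b) := by
        apply Finset.sum_le_sum
        intro a _
        apply Finset.sum_le_sum
        intro b _
        exact hpoint a b
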